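/- Let $p$ be a prime and let $T \subseteq \mathbb{Z}/p\mathbb{Z}$ satisfy $|T| > p^{1/2+\beta}$ for some real $\beta > 0$. Let $J = \lfloor 2(1+2\beta)/\beta \rfloor + 1$. Then for every residue class $r \in \mathbb{Z}/p\mathbb{Z}$, there exist elements $t_1, t_2, \ldots, t_{2J} \in T$ such that $r = t_1 t_2 + t_3 t_4 + \cdots + t_{2J-1} t_{2J}$ in $\mathbb{Z}/p\mathbb{Z}$. -/

import Mathlib

open Finset Complex

private lemma addchar_map_sum {A M : Type*} [AddCommMonoid A] [CommMonoid M]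
    (ψ : AddChar A M) {ι : Type*} (s : Finset ι) (f : ι → A) :
    ψ (∑ i ∈ s, f i) = ∏ i ∈ s, ψ (f i) := by
  classical
  induction s using Finset.cons_induction with
  | empty => simp
  | cons a s ha ih => rw [Finset.sum_cons, Finset.prod_cons, AddChar.map_add_eq_mul, ih]

private lemma addchar_conj (p : ℕ) [NeZero p] (ψ : AddChar (ZMod p) ℂ) (y : ZMod p) :
    (starRingEnd ℂ) (ψ y) = ψ (-y) := by
  have h1 : ψ y * ψ (-y) = 1 := by
    rw [← AddChar.map_add_eq_mul]; simp
  have h2 : ψ (-y) = (ψ y)⁻¹ := eq_inv_of_mul_eq_one_right h1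
  have hn : ‖ψ y‖ = 1 := by
    exact AddChar.norm_apply ψ y
  rw [h2, ← Complex.inv_eq_conj hn]

theorem stmt_3 (p : ℕ) [Fact p.Prime] (T : Finset (ZMod p)) (β : ℝ) (hβ : 0 < β)
    (hT : (T.card : ℝ) > (p : ℝ) ^ ((1 : ℝ) / 2 + β))
    (J : ℕ) (hJ : J = ⌊2 * (1 + 2 * β) / β⌋₊ + 1) :
    ∀ r : ZMod p, ∃ t₁ t₂ : Fin J → ZMod p,
      (∀ i, t₁ i ∈ T ∧ t₂ i ∈ T) ∧ r = ∑ i, t₁ i * t₂ i := by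
  classical
  intro r
  by_contra hcon
  push_neg at hcon
  haveI : NeZero p := ⟨(Fact.out : p.Prime).ne_zero⟩
  set ψ := ZMod.stdAddChar (N := p) with hψdef
  have hprim : (ZMod.stdAddChar (N := p)).IsPrimitive := ZMod.isPrimitive_stdAddChar p
  have horth : ∀ b : ZMod p, ∑ x : ZMod p, ψ (x * b) = if b = 0 then (p : ℂ) else 0 := by
    intro b
    have := AddChar.sum_mulShift b hprim
    rw [ZMod.card p, apply_ite (Nat.cast : ℕ → ℂ), Nat.cast_zero] at this
    exact this
  set S : ZMod p → ℂ := fun x => ∑ ab ∈ T ×ˢ T, ψ (x * (ab.1 * ab.2)) with hSdef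
  set G := Fintype.piFinset (fun _ : Fin J => T ×ˢ T) with hGdef
  -- every g in G fails
  have hfail : ∀ g ∈ G, ¬ ((∑ i, (g i).1 * (g i).2) = r) := by
    intro g hg h
    rw [Fintype.mem_piFinset] at hg
    refine hcon (fun i => (g i).1) (fun i => (g i).2) (fun i => ?_) h.symm
    have := hg i
    rw [Finset.mem_product] at this
    exact this
  -- main identity
  have hid : ∑ x : ZMod p, (S x) ^ J * ψ (-(x * r)) = 0 := by
    have h1 : ∀ x : ZMod p, (S x) ^ J * ψ (-(x * r))
        = ∑ g ∈ G, ψ (x * ((∑ i, (g i).1 * (g i).2) - r)) := by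
      intro x
      have hpow : (S x) ^ J = ∑ g ∈ G, ∏ i : Fin J, ψ (x * ((g i).1 * (g i).2)) := by
        have hps := Finset.prod_univ_sum (t := fun _ : Fin J => T ×ˢ T)
          (f := fun _ ab => ψ (x * (ab.1 * ab.2)))
        rw [hGdef, ← hps, Finset.prod_const, Finset.card_univ, Fintype.card_fin]
      rw [hpow, Finset.sum_mul]
      refine Finset.sum_congr rfl fun g hg => ?_
      rw [← addchar_map_sum, ← AddChar.map_add_eq_mul]
      congr 1
      rw [← Finset.mul_sum]
      ring
    simp_rw [h1]
    rw [Finset.sum_comm]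
    refine Finset.sum_eq_zero fun g hg => ?_
    rw [horth ((∑ i, (g i).1 * (g i).2) - r),
      if_neg (fun h => hfail g hg (sub_eq_zero.mp h))]
  have hKnn : (0:ℝ) ≤ (T.card : ℝ) := Nat.cast_nonneg _
  have hpnn : (0:ℝ) ≤ (p : ℝ) := Nat.cast_nonneg _
  -- value at x = 0
  have hS0 : S 0 = (T.card : ℂ) ^ 2 := by
    rw [hSdef]
    simp only [zero_mul, AddChar.map_zero_eq_one, Finset.sum_const, Finset.card_product,
      nsmul_eq_mul, mul_one, sq]
    push_cast
    ring
  have hsplit : (T.card : ℂ) ^ (2 * J)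
      = -∑ x ∈ Finset.univ.erase (0 : ZMod p), (S x) ^ J * ψ (-(x * r)) := by
    have hadd : S 0 ^ J * ψ (-((0:ZMod p) * r))
        + ∑ x ∈ Finset.univ.erase (0 : ZMod p), S x ^ J * ψ (-(x * r)) = 0 := by
      rw [← hid]
      exact Finset.add_sum_erase Finset.univ (fun x => S x ^ J * ψ (-(x * r))) (Finset.mem_univ 0)
    have h0 : (S 0) ^ J * ψ (-(0 * r)) = (T.card : ℂ) ^ (2 * J) := by
      rw [hS0]
      simp [← pow_mul]
    rw [h0] at hadd
    exact eq_neg_of_add_eq_zero_left hadd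
  -- pointwise bound on S for x ≠ 0
  have hSbound : ∀ x : ZMod p, x ≠ 0 → ‖S x‖ ≤ (p : ℝ) ^ ((1:ℝ)/2) * T.card := by
    intro x hx
    set f : ZMod p → ℂ := fun a => ∑ b ∈ T, ψ (x * (a * b)) with hfdef
    have hS' : S x = ∑ a ∈ T, f a := Finset.sum_product T T _
    have hC : ∑ a : ZMod p, (f a * (starRingEnd ℂ) (f a)) = (p : ℂ) * T.card := by
      have hterm : ∀ a : ZMod p, f a * (starRingEnd ℂ) (f a)
          = ∑ b ∈ T, ∑ b' ∈ T, ψ (a * (x * (b - b'))) := by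
        intro a
        rw [hfdef]
        simp only [map_sum]
        rw [Finset.sum_mul_sum]
        refine Finset.sum_congr rfl fun b hb => Finset.sum_congr rfl fun b' hb' => ?_
        rw [addchar_conj p ψ, ← AddChar.map_add_eq_mul]
        congr 1
        ring
      simp_rw [hterm]
      rw [Finset.sum_comm]
      have hsw : ∀ b ∈ T, ∑ a : ZMod p, ∑ b' ∈ T, ψ (a * (x * (b - b')))
          = ∑ b' ∈ T, ∑ a : ZMod p, ψ (a * (x * (b - b'))) := fun b _ => Finset.sum_comm
      rw [Finset.sum_congr rfl hsw]
      have hin : ∀ b ∈ T, ∀ b' ∈ T, ∑ a : ZMod p, ψ (a * (x * (b - b')))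
          = if b' = b then (p:ℂ) else 0 := by
        intro b _ b' _
        have hcond : (x * (b - b') = 0) ↔ (b' = b) := by
          constructor
          · intro h
            rcases mul_eq_zero.mp h with h | h
            · exact absurd h hx
            · exact (sub_eq_zero.mp h).symm
          · intro h
            rw [h]
            simp
        rw [horth (x * (b - b')), if_congr hcond rfl rfl]
      calc ∑ b ∈ T, ∑ b' ∈ T, ∑ a : ZMod p, ψ (a * (x * (b - b')))
          = ∑ b ∈ T, ∑ b' ∈ T, (if b' = b then (p:ℂ) else 0) :=
            Finset.sum_congr rfl fun b hb =>
              Finset.sum_congr rfl fun b' hb' => hin b hb b' hb'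
        _ = ∑ b ∈ T, (p:ℂ) := by
            refine Finset.sum_congr rfl fun b hb => ?_
            rw [Finset.sum_ite_eq' T b (fun _ => (p:ℂ))]
            exact if_pos hb
        _ = (p:ℂ) * T.card := by
            rw [Finset.sum_const, nsmul_eq_mul, mul_comm]
    have htot : ∑ a : ZMod p, ‖f a‖ ^ 2 = (p : ℝ) * T.card := by
      have key : ∀ a : ZMod p, ((‖f a‖ : ℂ)) ^ 2 = f a * (starRingEnd ℂ) (f a) := by
        intro a
        rw [← Complex.ofReal_pow, Complex.mul_conj, Complex.normSq_eq_norm_sq]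
      apply Complex.ofReal_injective
      push_cast
      simp_rw [key]
      exact hC
    have h1 : ‖S x‖ ≤ ∑ a ∈ T, ‖f a‖ := by
      rw [hS']
      exact norm_sum_le _ _
    have h2 : (∑ a ∈ T, ‖f a‖) ^ 2 ≤ (T.card : ℝ) * ∑ a ∈ T, ‖f a‖ ^ 2 := by
      have := Finset.sum_mul_sq_le_sq_mul_sq T (fun _ => (1:ℝ)) (fun a => ‖f a‖)
      simpa using this
    have h3 : ∑ a ∈ T, ‖f a‖ ^ 2 ≤ ∑ a : ZMod p, ‖f a‖ ^ 2 :=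
      Finset.sum_le_sum_of_subset_of_nonneg (Finset.subset_univ T)
        (fun a _ _ => sq_nonneg _)
    have hhalfsq : ((p:ℝ) ^ ((1:ℝ)/2)) ^ 2 = (p:ℝ) := by
      rw [← Real.rpow_natCast ((p:ℝ) ^ ((1:ℝ)/2)) 2, ← Real.rpow_mul hpnn]
      norm_num
    have h4 : ‖S x‖ ^ 2 ≤ ((p:ℝ) ^ ((1:ℝ)/2) * T.card) ^ 2 := by
      have h5 : ‖S x‖ ^ 2 ≤ (∑ a ∈ T, ‖f a‖) ^ 2 :=
        pow_le_pow_left₀ (norm_nonneg _) h1 2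
      have h6 : (T.card:ℝ) * (∑ a ∈ T, ‖f a‖ ^ 2) ≤ (T.card:ℝ) * ((p:ℝ) * T.card) :=
        mul_le_mul_of_nonneg_left (h3.trans_eq htot) hKnn
      calc ‖S x‖ ^ 2 ≤ (T.card:ℝ) * ((p:ℝ) * T.card) := h5.trans (h2.trans h6)
        _ = ((p:ℝ) ^ ((1:ℝ)/2) * T.card) ^ 2 := by
            rw [mul_pow, hhalfsq]
            ring
    exact le_of_pow_le_pow_left₀ two_ne_zero
      (mul_nonneg (Real.rpow_nonneg hpnn _) hKnn) h4
  -- norm inequality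
  have hnorm : ((T.card : ℝ)) ^ (2*J) ≤ (p:ℝ) * ((p:ℝ) ^ ((1:ℝ)/2) * T.card) ^ J := by
    have e1 : ‖(T.card : ℂ) ^ (2*J)‖ = (T.card:ℝ) ^ (2*J) := by
      rw [norm_pow]
      norm_num
    rw [← e1, hsplit, norm_neg]
    calc ‖∑ x ∈ Finset.univ.erase (0:ZMod p), (S x)^J * ψ (-(x*r))‖
        ≤ ∑ x ∈ Finset.univ.erase (0:ZMod p), ‖(S x)^J * ψ (-(x*r))‖ := norm_sum_le _ _
      _ ≤ ∑ _x ∈ Finset.univ.erase (0:ZMod p), ((p:ℝ) ^ ((1:ℝ)/2) * T.card) ^ J := by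
          refine Finset.sum_le_sum fun x hx => ?_
          rw [norm_mul, norm_pow]
          have hx0 : x ≠ 0 := (Finset.mem_erase.mp hx).1
          have hone : ‖ψ (-(x*r))‖ = 1 := AddChar.norm_apply ψ _
          rw [hone, mul_one]
          exact pow_le_pow_left₀ (norm_nonneg _) (hSbound x hx0) J
      _ ≤ (p:ℝ) * ((p:ℝ) ^ ((1:ℝ)/2) * T.card) ^ J := by
          rw [Finset.sum_const, nsmul_eq_mul]
          apply mul_le_mul_of_nonneg_right
          · calc (((Finset.univ.erase (0:ZMod p)).card : ℕ) : ℝ)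
                ≤ ((Finset.univ : Finset (ZMod p)).card : ℝ) := by
                  exact_mod_cast Finset.card_le_card (Finset.erase_subset _ _)
              _ = (p:ℝ) := by rw [Finset.card_univ, ZMod.card]
          · positivity
  -- final numeric contradiction
  have hq1 : (1:ℝ) < p := by exact_mod_cast (Fact.out : p.Prime).one_lt
  have hβJ : 1 < β * (J:ℝ) := by
    have hx : 2 * (1 + 2*β) / β < (J:ℝ) := by
      rw [hJ]
      push_cast
      exact Nat.lt_floor_add_one _
    rw [div_lt_iff₀ hβ] at hx
    nlinarith
  have hKpos : (0:ℝ) < T.card := lt_of_le_of_lt (Real.rpow_nonneg hpnn _) hT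
  have hJ0 : J ≠ 0 := by
    rw [hJ]
    exact Nat.succ_ne_zero _
  have hKJ : (p:ℝ) ^ ((1:ℝ) + (J:ℝ) * ((1:ℝ)/2)) < (T.card:ℝ) ^ J := by
    have h5 : ((p:ℝ) ^ ((1:ℝ)/2 + β)) ^ J < (T.card:ℝ) ^ J :=
      pow_lt_pow_left₀ hT (Real.rpow_nonneg hpnn _) hJ0
    have h6 : ((p:ℝ) ^ ((1:ℝ)/2 + β)) ^ J = (p:ℝ) ^ (((1:ℝ)/2 + β) * (J:ℝ)) := by
      rw [← Real.rpow_natCast ((p:ℝ) ^ ((1:ℝ)/2 + β)) J, ← Real.rpow_mul hpnn]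
    have h7 : (p:ℝ) ^ ((1:ℝ) + (J:ℝ) * ((1:ℝ)/2)) < (p:ℝ) ^ (((1:ℝ)/2 + β) * (J:ℝ)) := by
      apply (Real.rpow_lt_rpow_left_iff hq1).mpr
      nlinarith
    rw [h6] at h5
    linarith
  have hhalfJ : ((p:ℝ) ^ ((1:ℝ)/2)) ^ J = (p:ℝ) ^ ((J:ℝ) * ((1:ℝ)/2)) := by
    rw [← Real.rpow_natCast ((p:ℝ) ^ ((1:ℝ)/2)) J, ← Real.rpow_mul hpnn, mul_comm]
  have hRHS : (p:ℝ) * ((p:ℝ) ^ ((1:ℝ)/2) * T.card) ^ J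
      = (p:ℝ) ^ ((1:ℝ) + (J:ℝ) * ((1:ℝ)/2)) * (T.card:ℝ) ^ J := by
    rw [mul_pow, hhalfJ, Real.rpow_add (by linarith : (0:ℝ) < p), Real.rpow_one, mul_assoc]
  rw [hRHS] at hnorm
  have hfin : ((T.card:ℝ)) ^ (2*J) < (T.card:ℝ) ^ (2*J) := by
    calc ((T.card:ℝ)) ^ (2*J) ≤ (p:ℝ) ^ ((1:ℝ) + (J:ℝ) * ((1:ℝ)/2)) * (T.card:ℝ) ^ J := hnorm
      _ < (T.card:ℝ) ^ J * (T.card:ℝ) ^ J := mul_lt_mul_of_pos_right hKJ (pow_pos hKpos J)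
      _ = (T.card:ℝ) ^ (2*J) := by rw [two_mul, pow_add]
  exact lt_irrefl _ hfin
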